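/- For every r>0 and every ζ=(η,ℓ) ∈ ℝ²×ℝ with η ≠ 0, there exist ζ₁=(ξ₁,τ₁) and ζ₂=(ξ₂,τ₂) in ℂ²×ℝ such that for j=1,2: |Im ξ_j| = r, τ_j = ξ_j·ξ_j, Re ξ_j · Im ξ_j = 0, and ζ₁ − conj(ζ₂) = ζ (i.e., ξ₁ − conj(ξ₂) = η as vectors in ℂ² and τ₁ − τ₂ = ℓ). Moreover one can choose them so that |ξ_j| ≤ (1/2)(|η| + |ℓ|/|η|) + r and |τ_j| ≤ |η|² + ℓ²/|η|² + 2r². -/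

import Mathlib

open Real

/-- Euclidean norm of a real vector in `ℝ²`. -/
noncomputable def nE (η : Fin 2 → ℝ) : ℝ := Real.sqrt (∑ i, (η i) ^ 2)

/-- Euclidean norm of a complex vector in `ℂ²`. -/
noncomputable def nC (ξ : Fin 2 → ℂ) : ℝ := Real.sqrt (∑ i, ‖ξ i‖ ^ 2)

/-- The conditions satisfied by each pair `(ξ_j, τ_j)` in Lemma 5.1:
`|Im ξ| = r`, `τ = ξ·ξ` (bilinear dot product), `Re ξ · Im ξ = 0`, together with the
size estimates `|ξ| ≤ (1/2)(|η| + |ℓ|/|η|) + r` and `|τ| ≤ |η|² + ℓ²/|η|² + 2r²`. -/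
def GoodPair (r ℓ : ℝ) (η : Fin 2 → ℝ) (ξ : Fin 2 → ℂ) (τ : ℝ) : Prop :=
  Real.sqrt (∑ i, (ξ i).im ^ 2) = r ∧
  (τ : ℂ) = ∑ i, (ξ i) ^ 2 ∧
  (∑ i, (ξ i).re * (ξ i).im) = 0 ∧
  nC ξ ≤ (1 / 2) * (nE η + |ℓ| / nE η) + r ∧
  |τ| ≤ (nE η) ^ 2 + ℓ ^ 2 / (nE η) ^ 2 + 2 * r ^ 2

lemma nE_pos (η : Fin 2 → ℝ) (hη : η ≠ 0) : 0 < nE η := by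
  have h : η 0 ≠ 0 ∨ η 1 ≠ 0 := by
    by_contra h
    push_neg at h
    exact hη (funext fun i => by fin_cases i <;> simp [h.1, h.2])
  apply Real.sqrt_pos.mpr
  rw [Fin.sum_univ_two]
  rcases h with h | h <;> positivity

lemma nE_sq (η : Fin 2 → ℝ) : (nE η) ^ 2 = η 0 ^ 2 + η 1 ^ 2 := by
  rw [nE, Fin.sum_univ_two, Real.sq_sqrt (by positivity)]

set_option maxHeartbeats 1000000 in
lemma aux (r ℓ c ε : ℝ) (hr : 0 < r) (η : Fin 2 → ℝ) (hη : η ≠ 0)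
    (hε : ε ^ 2 = 1)
    (hc : |c| ≤ (1 + |ℓ| / (nE η) ^ 2) / 2) :
    GoodPair r ℓ η
      ![(c * η 0 : ℂ) + (ε * (r / nE η) * η 1) * Complex.I,
        (c * η 1 : ℂ) - (ε * (r / nE η) * η 0) * Complex.I]
      (c ^ 2 * (nE η) ^ 2 - r ^ 2) := by
  have hn : 0 < nE η := nE_pos η hη
  have hn2 : (nE η) ^ 2 = η 0 ^ 2 + η 1 ^ 2 := nE_sq η
  set n := nE η with hndef
  have hne : n ≠ 0 := hn.ne'
  have hn2pos : (0:ℝ) < n ^ 2 := by positivity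
  have hkey : (r / n) ^ 2 * (η 0 ^ 2 + η 1 ^ 2) = r ^ 2 := by
    rw [← hn2]; field_simp
  have habs : |c| * n ≤ (n + |ℓ| / n) / 2 := by
    calc |c| * n ≤ (1 + |ℓ| / n ^ 2) / 2 * n :=
          mul_le_mul_of_nonneg_right hc hn.le
      _ = (n + |ℓ| / n) / 2 := by field_simp
  have hcn2 : |c| * n ^ 2 ≤ (n ^ 2 + |ℓ|) / 2 := by
    calc |c| * n ^ 2 ≤ (1 + |ℓ| / n ^ 2) / 2 * n ^ 2 :=
          mul_le_mul_of_nonneg_right hc hn2pos.le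
      _ = (n ^ 2 + |ℓ|) / 2 := by field_simp
  have hgoal : c ^ 2 * n ^ 2 * n ^ 2 ≤ n ^ 2 * n ^ 2 + ℓ ^ 2 := by
    nlinarith [mul_le_mul hcn2 hcn2 (by positivity) (by positivity),
      sq_abs c, sq_abs ℓ, sq_nonneg (n ^ 2 - |ℓ|), abs_nonneg ℓ, abs_nonneg c]
  have hcn : c ^ 2 * n ^ 2 ≤ n ^ 2 + ℓ ^ 2 / n ^ 2 := by
    have hdiv : ℓ ^ 2 / n ^ 2 * n ^ 2 = ℓ ^ 2 := div_mul_cancel₀ _ hn2pos.ne'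
    nlinarith [hgoal, hn2pos, hdiv]
  refine ⟨?_, ?_, ?_, ?_, ?_⟩
  · rw [Fin.sum_univ_two]
    simp only [Matrix.cons_val_zero, Matrix.cons_val_one, Matrix.head_cons]
    have h1 : (((c * η 0 : ℂ) + (ε * (r / n) * η 1) * Complex.I).im) ^ 2 +
        (((c * η 1 : ℂ) - (ε * (r / n) * η 0) * Complex.I).im) ^ 2 = r ^ 2 := by
      simp
      linear_combination ε ^ 2 * hkey + r ^ 2 * hε
    rw [h1, Real.sqrt_sq hr.le]
  · rw [Fin.sum_univ_two]
    simp only [Matrix.cons_val_zero, Matrix.cons_val_one, Matrix.head_cons]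
    apply Complex.ext <;> simp [pow_two]
    · linear_combination c ^ 2 * hn2 + ε ^ 2 * hkey + r ^ 2 * hε
    · ring
  · rw [Fin.sum_univ_two]
    simp only [Matrix.cons_val_zero, Matrix.cons_val_one, Matrix.head_cons]
    simp
    ring
  · rw [nC, Fin.sum_univ_two]
    simp only [Matrix.cons_val_zero, Matrix.cons_val_one, Matrix.head_cons]
    have h1 : ‖((c * η 0 : ℂ) + (ε * (r / n) * η 1) * Complex.I)‖ ^ 2 +
        ‖((c * η 1 : ℂ) - (ε * (r / n) * η 0) * Complex.I)‖ ^ 2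
        = c ^ 2 * n ^ 2 + r ^ 2 := by
      rw [Complex.sq_norm, Complex.sq_norm, Complex.normSq_apply, Complex.normSq_apply]
      simp
      linear_combination - c ^ 2 * hn2 + ε ^ 2 * hkey + r ^ 2 * hε
    rw [h1]
    have h2 : Real.sqrt (c ^ 2 * n ^ 2 + r ^ 2) ≤ |c| * n + r := by
      have h3 : c ^ 2 * n ^ 2 + r ^ 2 ≤ (|c| * n + r) ^ 2 := by
        nlinarith [mul_nonneg (mul_nonneg (abs_nonneg c) hn.le) hr.le, sq_abs c]
      calc Real.sqrt (c ^ 2 * n ^ 2 + r ^ 2) ≤ Real.sqrt ((|c| * n + r) ^ 2) :=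
            Real.sqrt_le_sqrt h3
        _ = |c| * n + r := Real.sqrt_sq (add_nonneg (mul_nonneg (abs_nonneg c) hn.le) hr.le)
    linarith [h2, habs]
  · rw [abs_le]
    have h0 : 0 ≤ ℓ ^ 2 / n ^ 2 := by positivity
    have hc0 : 0 ≤ c ^ 2 * n ^ 2 := mul_nonneg (sq_nonneg c) hn2pos.le
    constructor <;> linarith [hcn, h0, hc0, sq_nonneg r, hn2pos]

set_option maxHeartbeats 1000000 in
theorem stmt0 (r : ℝ) (hr : 0 < r) (η : Fin 2 → ℝ) (hη : η ≠ 0) (ℓ : ℝ) :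
    ∃ (ξ₁ ξ₂ : Fin 2 → ℂ) (τ₁ τ₂ : ℝ),
      (∀ i, ξ₁ i - (starRingEnd ℂ) (ξ₂ i) = (η i : ℂ)) ∧
      τ₁ - τ₂ = ℓ ∧
      GoodPair r ℓ η ξ₁ τ₁ ∧ GoodPair r ℓ η ξ₂ τ₂ := by
  have hn : 0 < nE η := nE_pos η hη
  set n := nE η with hndef
  have hn2pos : (0:ℝ) < n ^ 2 := by positivity
  set a : ℝ := ℓ / n ^ 2 with hadef
  have haabs : |a| = |ℓ| / n ^ 2 := by
    rw [hadef, abs_div, abs_of_pos hn2pos]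
  set c1 : ℝ := (1 + a) / 2 with hc1def
  set c2 : ℝ := (a - 1) / 2 with hc2def
  have hc1 : |c1| ≤ (1 + |ℓ| / n ^ 2) / 2 := by
    rw [← haabs, hc1def]
    calc |(1 + a) / 2| = |1 + a| / 2 := by rw [abs_div]; norm_num
      _ ≤ (|(1:ℝ)| + |a|) / 2 := by
          have := abs_add_le (1:ℝ) a; gcongr
      _ = (1 + |a|) / 2 := by norm_num
  have hc2 : |c2| ≤ (1 + |ℓ| / n ^ 2) / 2 := by
    rw [← haabs, hc2def]
    calc |(a - 1) / 2| = |a - 1| / 2 := by rw [abs_div]; norm_num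
      _ ≤ (|a| + |(1:ℝ)|) / 2 := by
          have := abs_sub a (1:ℝ); gcongr
      _ = (1 + |a|) / 2 := by rw [abs_one]; ring
  refine ⟨![(c1 * η 0 : ℂ) + ((1:ℝ) * (r / n) * η 1) * Complex.I,
            (c1 * η 1 : ℂ) - ((1:ℝ) * (r / n) * η 0) * Complex.I],
          ![(c2 * η 0 : ℂ) + ((-1:ℝ) * (r / n) * η 1) * Complex.I,
            (c2 * η 1 : ℂ) - ((-1:ℝ) * (r / n) * η 0) * Complex.I],
          c1 ^ 2 * n ^ 2 - r ^ 2, c2 ^ 2 * n ^ 2 - r ^ 2, ?_, ?_, ?_, ?_⟩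
  · intro i
    fin_cases i <;>
      · simp only [Matrix.cons_val_zero, Matrix.cons_val_one, Matrix.head_cons]
        apply Complex.ext <;> simp <;> rw [hc1def, hc2def] <;> ring
  · have : c1 ^ 2 - c2 ^ 2 = a := by rw [hc1def, hc2def]; ring
    have ha : a * n ^ 2 = ℓ := by rw [hadef]; field_simp
    nlinarith [this, ha]
  · exact aux r ℓ c1 1 hr η hη (by norm_num) hc1
  · exact aux r ℓ c2 (-1) hr η hη (by norm_num) hc2
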